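/- arXiv:2212.11934 — 2 statements merged into one kernel-verified Lean document; each statement's English description precedes it below -/
import Mathlib

section
/- Let S be a real m×n matrix and suppose ψ₁, …, ψ_n form an orthonormal basis of ℝⁿ consisting of eigenvectors of Sᵀ S, with (Sᵀ S) ψ_i = σ_i² ψ_i where σ₁ ≥ σ₂ ≥ … ≥ σ_n ≥ 0. Fix P with 1 ≤ P ≤ n and σ_P > 0, set ζ_j := σ_j⁻¹ • (S ψ_j) for j = 1, …, P, and let Π be the orthogonal projection of ℝᵐ onto span{ζ₁, …, ζ_P}. Denoting by s_j ∈ ℝᵐ the j-th column of S (j = 1, …, n), one has ∑_{j=1}^{n} ‖s_j − Π s_j‖² = ∑_{i=P+1}^{n} σ_i². -/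
open Matrix

/-- **POD projection-error identity.**
Let `S ∈ ℝ^{m×n}` and let `ψ 0, …, ψ (n-1)` be an orthonormal basis of `ℝⁿ`
of eigenvectors of `Sᵀ S`, with `(Sᵀ S) (ψ i) = (σ i)² (ψ i)` and
`σ 0 ≥ σ 1 ≥ … ≥ σ (n-1) ≥ 0`.  Fix `P` with `1 ≤ P ≤ n` such that the first
`P` singular values are positive, set `ζ i := (σ i)⁻¹ • S (ψ i)` for `i < P`,
and let `Π` be the orthogonal projection of `ℝᵐ` onto `span {ζ i : i < P}`.
Then the total squared Euclidean projection error of the columns of `S`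
equals the sum of the neglected squared singular values:
`∑ⱼ ‖sⱼ − Π sⱼ‖² = ∑_{i ≥ P} (σ i)²`. -/
theorem pod_projection_error_identity
    (m n : ℕ) (S : Matrix (Fin m) (Fin n) ℝ)
    (ψ : Fin n → (Fin n → ℝ)) (σ : Fin n → ℝ)
    (hON : Orthonormal ℝ
      (fun i => (EuclideanSpace.equiv (Fin n) ℝ).symm (ψ i)))
    (heig : ∀ i, (Sᵀ * S).mulVec (ψ i) = (σ i) ^ 2 • ψ i)
    (hsorted : ∀ i j : Fin n, i ≤ j → σ j ≤ σ i)
    (hnonneg : ∀ i, 0 ≤ σ i)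
    (P : ℕ) (hP1 : 1 ≤ P) (hPn : P ≤ n)
    (hσP : ∀ i : Fin n, (i : ℕ) < P → 0 < σ i)
    (ζ : Fin n → EuclideanSpace ℝ (Fin m))
    (hζ : ∀ i : Fin n, (i : ℕ) < P →
      ζ i = (σ i)⁻¹ • (EuclideanSpace.equiv (Fin m) ℝ).symm (S.mulVec (ψ i)))
    (K : Submodule ℝ (EuclideanSpace ℝ (Fin m)))
    (hK : K = Submodule.span ℝ (ζ '' {i : Fin n | (i : ℕ) < P})) :
    ∑ j : Fin n,
        ‖(EuclideanSpace.equiv (Fin m) ℝ).symm (fun i => S i j) -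
          (K.orthogonalProjectionOnto
            ((EuclideanSpace.equiv (Fin m) ℝ).symm (fun i => S i j)) :
              EuclideanSpace ℝ (Fin m))‖ ^ 2 =
      ∑ i ∈ Finset.univ.filter (fun i : Fin n => P ≤ (i : ℕ)), (σ i) ^ 2 := by
  classical
  haveI : Nonempty (Fin n) := ⟨⟨0, lt_of_lt_of_le hP1 hPn⟩⟩
  have hinm : ∀ u v : Fin m → ℝ,
      (inner ℝ ((EuclideanSpace.equiv (Fin m) ℝ).symm u)
        ((EuclideanSpace.equiv (Fin m) ℝ).symm v) : ℝ) = u ⬝ᵥ v := by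
    intro u v; simp [PiLp.inner_apply, dotProduct, mul_comm]
  have hinn : ∀ u v : Fin n → ℝ,
      (inner ℝ ((EuclideanSpace.equiv (Fin n) ℝ).symm u)
        ((EuclideanSpace.equiv (Fin n) ℝ).symm v) : ℝ) = u ⬝ᵥ v := by
    intro u v; simp [PiLp.inner_apply, dotProduct, mul_comm]
  have hkey : ∀ x y : Fin n → ℝ, (S.mulVec x) ⬝ᵥ (S.mulVec y) = x ⬝ᵥ (Sᵀ * S).mulVec y := by
    intro x y
    conv_rhs => rw [← Matrix.mulVec_mulVec, dotProduct_mulVec, Matrix.vecMul_transpose]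
  have hψ : ∀ i j : Fin n, ψ i ⬝ᵥ ψ j = if i = j then 1 else 0 := by
    intro i j
    have := orthonormal_iff_ite.mp hON i j
    rw [hinn] at this; simpa using this
  have hSψ : ∀ i j : Fin n, (S.mulVec (ψ i)) ⬝ᵥ (S.mulVec (ψ j))
      = (σ j) ^ 2 * (if i = j then 1 else 0) := by
    intro i j
    rw [hkey, heig, dotProduct_smul, hψ]; simp
  have hζON : Orthonormal ℝ (fun i : {i : Fin n // (i : ℕ) < P} => ζ i) := by
    rw [orthonormal_iff_ite]
    intro i j
    rw [hζ i i.2, hζ j j.2, inner_smul_left, inner_smul_right, hinm, hSψ]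
    rcases eq_or_ne i j with h | h
    · subst h
      have hσ := (hσP i i.2).ne'
      simp only [if_pos rfl, mul_one, map_inv₀, RCLike.star_def, starRingEnd_apply, star_trivial]
      field_simp
    · have hij : (i : Fin n) ≠ (j : Fin n) := fun hc => h (Subtype.ext hc)
      simp [hij, h]
  have hsp : ⊤ ≤ Submodule.span ℝ
      (Set.range fun i => (EuclideanSpace.equiv (Fin n) ℝ).symm (ψ i)) := by
    rw [hON.linearIndependent.span_eq_top_of_card_eq_finrank (by simp)]
  set B : OrthonormalBasis (Fin n) ℝ (EuclideanSpace ℝ (Fin n)) :=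
    OrthonormalBasis.mk hON hsp with hB
  have hBcoe : ∀ k, B k = (EuclideanSpace.equiv (Fin n) ℝ).symm (ψ k) := by
    intro k
    have := OrthonormalBasis.coe_mk hON hsp
    rw [hB]
    exact congrFun this k
  have parseval : ∀ (F : Type) [NormedAddCommGroup F] [i2 : InnerProductSpace ℝ F]
      (ι : Type) [Fintype ι] (C : OrthonormalBasis ι ℝ F) (v : F),
      ‖v‖ ^ 2 = ∑ k, (inner ℝ (C k) v : ℝ) ^ 2 := by
    intro F _ _ ι _ C v
    rw [← C.repr.norm_map v, EuclideanSpace.norm_eq, Real.sq_sqrt (by positivity)]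
    simp [C.repr_apply_apply, sq_abs]
  obtain ⟨b, hbcoe⟩ : ∃ b : OrthonormalBasis {i : Fin n // (i:ℕ) < P} ℝ K,
      ∀ i, (b i : EuclideanSpace ℝ (Fin m)) = ζ i := by
    have hKset : K = Submodule.span ℝ
        ((Finset.univ.image (fun i : {i : Fin n // (i:ℕ) < P} => ζ i) :
          Finset (EuclideanSpace ℝ (Fin m))) : Set (EuclideanSpace ℝ (Fin m))) := by
      rw [hK, Finset.coe_image, Finset.coe_univ, Set.image_univ]
      congr 1
      rw [Set.image_eq_range]; rfl
    let b0 := OrthonormalBasis.span hζON Finset.univ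
    let e := LinearIsometryEquiv.ofEq _ _ hKset.symm
    refine ⟨(b0.map e).reindex (Equiv.subtypeUnivEquiv (fun i => Finset.mem_univ i)), ?_⟩
    intro i
    simp [b0, e, OrthonormalBasis.coe_reindex]
  set s : Fin n → EuclideanSpace ℝ (Fin m) :=
    fun j => (EuclideanSpace.equiv (Fin m) ℝ).symm (fun i => S i j) with hs
  have hcol : ∀ j : Fin n,
      ‖s j - (K.orthogonalProjectionOnto (s j) : EuclideanSpace ℝ (Fin m))‖ ^ 2
        = ‖s j‖ ^ 2 - ∑ i : {i : Fin n // (i:ℕ) < P}, (inner ℝ (ζ i) (s j) : ℝ) ^ 2 := by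
    intro j
    set p : EuclideanSpace ℝ (Fin m) := (K.orthogonalProjectionOnto (s j) :
      EuclideanSpace ℝ (Fin m)) with hp
    have hmem : s j - p ∈ Kᗮ := K.sub_starProjection_mem_orthogonal (s j)
    have hz : (inner ℝ p (s j - p) : ℝ) = 0 :=
      (hmem _ (K.orthogonalProjectionOnto (s j)).2).symm ▸ rfl
    have hpyth := norm_add_sq_real p (s j - p)
    rw [hz] at hpyth
    simp only [add_sub_cancel, mul_zero, add_zero] at hpyth
    have hpn : ‖p‖ ^ 2 = ∑ i : {i : Fin n // (i:ℕ) < P}, (inner ℝ (ζ i) (s j) : ℝ) ^ 2 := by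
      have h1 : ‖p‖ = ‖K.orthogonalProjectionOnto (s j)‖ := rfl
      rw [h1, parseval _ _ b]
      refine Finset.sum_congr rfl fun i _ => ?_
      have h2 : (inner ℝ (b i) (K.orthogonalProjectionOnto (s j)) : ℝ)
          = inner ℝ ((b i : EuclideanSpace ℝ (Fin m))) p := rfl
      rw [h2, hbcoe]
      have h3 : (inner ℝ (ζ (i : Fin n)) (s j - p) : ℝ) = 0 := by
        apply Submodule.inner_right_of_mem_orthogonal (K := K) _ hmem
        rw [hK]
        exact Submodule.subset_span ⟨i, i.2, rfl⟩
      rw [inner_sub_right] at h3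
      rw [show (inner ℝ (ζ (i : Fin n)) p : ℝ) = inner ℝ (ζ (i : Fin n)) (s j) from by linarith]
    linarith
  have henergy : ∑ j, ‖s j‖ ^ 2 = ∑ k, (σ k) ^ 2 := by
    have h1 : ∀ j, ‖s j‖ ^ 2 = ∑ i, (S i j) ^ 2 := by
      intro j
      rw [hs, ← real_inner_self_eq_norm_sq, hinm]
      simp [dotProduct, sq]
    have h2 : ∀ i : Fin m, ∑ j, (S i j) ^ 2 = ∑ k, ((S.mulVec (ψ k)) i) ^ 2 := by
      intro i
      have hpv := parseval _ _ B ((EuclideanSpace.equiv (Fin n) ℝ).symm (fun j => S i j))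
      rw [← real_inner_self_eq_norm_sq, hinn] at hpv
      have hrow : ∀ k, (inner ℝ (B k)
          ((EuclideanSpace.equiv (Fin n) ℝ).symm (fun j => S i j)) : ℝ)
          = (S.mulVec (ψ k)) i := by
        intro k
        rw [hBcoe, hinn]
        simp [dotProduct, Matrix.mulVec, mul_comm]
      simp only [hrow] at hpv
      simpa [dotProduct, sq] using hpv
    calc ∑ j, ‖s j‖ ^ 2 = ∑ j, ∑ i, (S i j) ^ 2 := by simp [h1]
      _ = ∑ i, ∑ j, (S i j) ^ 2 := Finset.sum_comm
      _ = ∑ i, ∑ k, ((S.mulVec (ψ k)) i) ^ 2 := by simp [h2]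
      _ = ∑ k, ∑ i, ((S.mulVec (ψ k)) i) ^ 2 := Finset.sum_comm
      _ = ∑ k, (σ k) ^ 2 := by
          refine Finset.sum_congr rfl fun k _ => ?_
          have := hSψ k k
          simpa [dotProduct, sq] using this
  have hcap : ∀ i : {i : Fin n // (i:ℕ) < P},
      ∑ j, (inner ℝ (ζ (i : Fin n)) (s j) : ℝ) ^ 2 = (σ i) ^ 2 := by
    intro i
    have hinner : ∀ j, (inner ℝ (ζ (i : Fin n)) (s j) : ℝ) = σ i * ψ i j := by
      intro j
      rw [hζ i i.2, inner_smul_left, hinm]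
      have hd : (S.mulVec (ψ i)) ⬝ᵥ (fun l => S l j) = ((Sᵀ * S).mulVec (ψ i)) j := by
        rw [← Matrix.mulVec_mulVec]
        simp [dotProduct, Matrix.mulVec, Matrix.transpose_apply, mul_comm]
      rw [hd, heig]
      have hσ := (hσP i i.2).ne'
      simp only [Pi.smul_apply, smul_eq_mul, map_inv₀, RCLike.star_def, starRingEnd_apply,
        star_trivial]
      field_simp
    simp only [hinner, mul_pow]
    rw [← Finset.mul_sum]
    have hone : ∑ j, (ψ i j) ^ 2 = 1 := by
      have := hψ i i
      simpa [dotProduct, sq] using this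
    rw [hone, mul_one]
  have hsub : ∑ i ∈ Finset.univ.filter (fun i : Fin n => (i : ℕ) < P), (σ i) ^ 2
      = ∑ i : {i : Fin n // (i:ℕ) < P}, (σ (i : Fin n)) ^ 2 :=
    Finset.sum_subtype _ (by simp) _
  calc ∑ j, ‖s j - (K.orthogonalProjectionOnto (s j) : EuclideanSpace ℝ (Fin m))‖ ^ 2
      = ∑ j, (‖s j‖ ^ 2 - ∑ i : {i : Fin n // (i:ℕ) < P}, (inner ℝ (ζ i) (s j) : ℝ) ^ 2) := by
        simp only [hcol]
    _ = ∑ j, ‖s j‖ ^ 2 - ∑ j, ∑ i : {i : Fin n // (i:ℕ) < P}, (inner ℝ (ζ i) (s j) : ℝ) ^ 2 :=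
        Finset.sum_sub_distrib _ _
    _ = ∑ k, (σ k) ^ 2 - ∑ i : {i : Fin n // (i:ℕ) < P}, (σ (i : Fin n)) ^ 2 := by
        rw [henergy, Finset.sum_comm]
        congr 1
        exact Finset.sum_congr rfl fun i _ => hcap i
    _ = ∑ i ∈ Finset.univ.filter (fun i : Fin n => P ≤ (i : ℕ)), (σ i) ^ 2 := by
        rw [← hsub]
        have hsplit := Finset.sum_filter_add_sum_filter_not Finset.univ
          (fun i : Fin n => (i : ℕ) < P) (fun i => (σ i) ^ 2)
        have hnot : (Finset.univ.filter (fun i : Fin n => ¬ (i : ℕ) < P))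
            = Finset.univ.filter (fun i : Fin n => P ≤ (i : ℕ)) := by
          apply Finset.filter_congr; intro i _; simp [not_lt]
        rw [hnot] at hsplit
        linarith
end

section
/- Let S be a real m×n matrix and suppose ψ₁, …, ψ_n form an orthonormal eigenbasis of ℝⁿ for Sᵀ S with eigenvalues σ₁² ≥ … ≥ σ_n² ≥ 0, not all zero. Fix P with 1 ≤ P ≤ n and σ_P > 0, set ζ_j := σ_j⁻¹ • (S ψ_j) for j ≤ P, and let Π be the orthogonal projection of ℝᵐ onto span{ζ₁, …, ζ_P}. If ε ≥ 0 satisfies 1 − (∑_{i=1}^{P} σ_i²)/(∑_{i=1}^{n} σ_i²) ≤ ε, then ∑_{j=1}^{n} ‖s_j − Π s_j‖² ≤ ε · ∑_{j=1}^{n} ‖s_j‖², where s_j denotes the j-th column of S. -/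
open Matrix

open RealInnerProductSpace Finset

/-- **POD truncation criterion.**
With `S ∈ ℝ^{m×n}`, an orthonormal eigenbasis `ψ` of `Sᵀ S` with eigenvalues
`σ 0 ² ≥ … ≥ σ (n-1) ² ≥ 0` not all zero, `1 ≤ P ≤ n` with positive leading
singular values, POD vectors `ζ i := (σ i)⁻¹ • S (ψ i)` for `i < P`, and `Π`
the orthogonal projection onto `span {ζ i : i < P}`: if `ε ≥ 0` satisfies
`1 − (∑_{i<P} σ i ²)/(∑ᵢ σ i ²) ≤ ε`, then
`∑ⱼ ‖sⱼ − Π sⱼ‖² ≤ ε · ∑ⱼ ‖sⱼ‖²`, where `sⱼ` is the `j`-th column of `S`. -/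
theorem pod_truncation_criterion
    (m n : ℕ) (S : Matrix (Fin m) (Fin n) ℝ)
    (ψ : Fin n → (Fin n → ℝ)) (σ : Fin n → ℝ)
    (hON : Orthonormal ℝ
      (fun i => (EuclideanSpace.equiv (Fin n) ℝ).symm (ψ i)))
    (heig : ∀ i, (Sᵀ * S).mulVec (ψ i) = (σ i) ^ 2 • ψ i)
    (hsorted : ∀ i j : Fin n, i ≤ j → σ j ≤ σ i)
    (hnonneg : ∀ i, 0 ≤ σ i)
    (hnotall : ∃ i, σ i ≠ 0)
    (P : ℕ) (hP1 : 1 ≤ P) (hPn : P ≤ n)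
    (hσP : ∀ i : Fin n, (i : ℕ) < P → 0 < σ i)
    (ζ : Fin n → EuclideanSpace ℝ (Fin m))
    (hζ : ∀ i : Fin n, (i : ℕ) < P →
      ζ i = (σ i)⁻¹ • (EuclideanSpace.equiv (Fin m) ℝ).symm (S.mulVec (ψ i)))
    (K : Submodule ℝ (EuclideanSpace ℝ (Fin m)))
    (hK : K = Submodule.span ℝ (ζ '' {i : Fin n | (i : ℕ) < P}))
    (ε : ℝ) (hε0 : 0 ≤ ε)
    (hε : 1 - (∑ i ∈ Finset.univ.filter (fun i : Fin n => (i : ℕ) < P),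
                (σ i) ^ 2) / (∑ i : Fin n, (σ i) ^ 2) ≤ ε) :
    ∑ j : Fin n,
        ‖(EuclideanSpace.equiv (Fin m) ℝ).symm (fun i => S i j) -
          (K.orthogonalProjectionOnto
            ((EuclideanSpace.equiv (Fin m) ℝ).symm (fun i => S i j)) :
              EuclideanSpace ℝ (Fin m))‖ ^ 2 ≤
      ε * ∑ j : Fin n,
        ‖(EuclideanSpace.equiv (Fin m) ℝ).symm (fun i => S i j)‖ ^ 2 := by
  classical
  set v : Fin n → EuclideanSpace ℝ (Fin m) :=
    fun i => (EuclideanSpace.equiv (Fin m) ℝ).symm (S.mulVec (ψ i)) with hv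
  set s : Fin n → EuclideanSpace ℝ (Fin m) :=
    fun j => (EuclideanSpace.equiv (Fin m) ℝ).symm (fun i => S i j) with hs
  -- orthonormality as dot products
  have hψ : ∀ i k : Fin n, dotProduct (ψ i) (ψ k) = if i = k then 1 else 0 := by
    intro i k
    have := (orthonormal_iff_ite (𝕜 := ℝ)).mp hON i k
    simpa [PiLp.inner_apply, RCLike.inner_apply, dotProduct,
      mul_comm] using this
  -- inner products of the v i
  have hvv : ∀ i k : Fin n, ⟪v i, v k⟫ = if i = k then σ k ^ 2 else 0 := by
    intro i k
    have h1 : ⟪v i, v k⟫ = dotProduct (S.mulVec (ψ i)) (S.mulVec (ψ k)) := by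
      simp [hv, PiLp.inner_apply, RCLike.inner_apply, dotProduct,
        mul_comm]
    have h2 : dotProduct (S.mulVec (ψ i)) (S.mulVec (ψ k))
        = dotProduct (ψ i) ((Sᵀ * S).mulVec (ψ k)) := by
      rw [← Matrix.mulVec_mulVec, Matrix.dotProduct_mulVec, Matrix.dotProduct_mulVec,
        Matrix.vecMul_transpose, Matrix.dotProduct_mulVec]
    rw [h1, h2, heig, dotProduct_smul, smul_eq_mul, hψ]
    split <;> simp
  -- column orthonormality
  have hcol : ∀ j k : Fin n, (∑ i, ψ i j * ψ i k) = if j = k then 1 else 0 := by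
    have hMMT : (Matrix.of ψ) * (Matrix.of ψ)ᵀ = 1 := by
      ext i k
      have := hψ i k
      simpa [Matrix.mul_apply, Matrix.one_apply, dotProduct] using this
    have hMTM : (Matrix.of ψ)ᵀ * (Matrix.of ψ) = 1 := mul_eq_one_comm.mp hMMT
    intro j k
    have := congrFun (congrFun hMTM j) k
    simpa [Matrix.mul_apply, Matrix.one_apply] using this
  -- expansion of columns
  have hexp : ∀ j, s j = ∑ i, ψ i j • v i := by
    intro j
    have hcv : (fun x => S x j) = ∑ i : Fin n, ψ i j • S.mulVec (ψ i) := by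
      funext x
      rw [Finset.sum_apply]
      have hterm : ∀ i : Fin n, (ψ i j • S.mulVec (ψ i)) x
          = ∑ k, S x k * (ψ i j * ψ i k) := by
        intro i
        rw [Pi.smul_apply, smul_eq_mul]
        show ψ i j * dotProduct (fun k => S x k) (ψ i) = _
        rw [dotProduct, Finset.mul_sum]
        exact Finset.sum_congr rfl fun k _ => by ring
      rw [Finset.sum_congr rfl fun i _ => hterm i, Finset.sum_comm]
      have : ∀ k, (∑ i, S x k * (ψ i j * ψ i k)) = if j = k then S x k else 0 := by
        intro k
        rw [← Finset.mul_sum, hcol j k]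
        split <;> simp
      rw [Finset.sum_congr rfl fun k _ => this k, Finset.sum_ite_eq]
      simp
    rw [hs]
    dsimp only
    rw [hcv, map_sum]
    exact Finset.sum_congr rfl fun i _ => by rw [_root_.map_smul]
  -- norms of orthogonal combinations
  have hnormc : ∀ (t : Finset (Fin n)) (c : Fin n → ℝ),
      ‖∑ i ∈ t, c i • v i‖ ^ 2 = ∑ i ∈ t, c i ^ 2 * σ i ^ 2 := by
    intro t c
    rw [← real_inner_self_eq_norm_sq, sum_inner]
    refine Finset.sum_congr rfl fun i hi => ?_
    rw [inner_sum]
    have h2 : ∀ k ∈ t, ⟪c i • v i, c k • v k⟫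
        = if i = k then c i ^ 2 * σ i ^ 2 else 0 := by
      intro k hk
      rw [real_inner_smul_left, real_inner_smul_right, hvv]
      by_cases h : i = k
      · subst h; simp [pow_two]; ring
      · simp [h]
    rw [Finset.sum_congr rfl h2, Finset.sum_ite_eq, if_pos hi]
  -- the two index sets
  set t₁ : Finset (Fin n) := Finset.univ.filter (fun i : Fin n => (i : ℕ) < P) with ht₁
  set t₂ : Finset (Fin n) := Finset.univ.filter (fun i : Fin n => ¬ (i : ℕ) < P) with ht₂
  have hsplit : ∀ j, s j = (∑ i ∈ t₁, ψ i j • v i) + (∑ i ∈ t₂, ψ i j • v i) := by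
    intro j
    rw [hexp j,
      ← Finset.sum_filter_add_sum_filter_not Finset.univ (fun i : Fin n => (i : ℕ) < P)]
  have haK : ∀ j, (∑ i ∈ t₁, ψ i j • v i) ∈ K := by
    intro j
    refine Submodule.sum_mem _ fun i hi => ?_
    have hiP : (i : ℕ) < P := (Finset.mem_filter.mp hi).2
    have hvi : v i = σ i • ζ i := by
      rw [hζ i hiP, smul_smul, mul_inv_cancel₀ (ne_of_gt (hσP i hiP)), one_smul]
    rw [hvi, smul_smul, hK]
    exact Submodule.smul_mem _ _ (Submodule.subset_span ⟨i, hiP, rfl⟩)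
  have hbK : ∀ j, ∀ w ∈ K, ⟪(∑ i ∈ t₂, ψ i j • v i), w⟫ = 0 := by
    intro j w hw
    rw [hK] at hw
    induction hw using Submodule.span_induction with
    | mem x hx =>
        obtain ⟨i, hiP, rfl⟩ := hx
        rw [hζ i hiP, real_inner_smul_right, sum_inner]
        have hz : ∀ k ∈ t₂, ⟪ψ k j • v k, v i⟫ = 0 := by
          intro k hk
          have hkP : ¬ (k : ℕ) < P := (Finset.mem_filter.mp hk).2
          have hki : k ≠ i := fun h => hkP (h ▸ hiP)
          rw [real_inner_smul_left, hvv]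
          simp [hki]
        rw [Finset.sum_congr rfl hz]
        simp
    | zero => simp
    | add x y _ _ hx hy => rw [inner_add_right, hx, hy, add_zero]
    | smul a x _ hx => rw [real_inner_smul_right, hx, mul_zero]
  have hproj : ∀ j, ((K.orthogonalProjectionOnto (s j) :
      EuclideanSpace ℝ (Fin m))) = ∑ i ∈ t₁, ψ i j • v i := by
    intro j
    refine (Submodule.starProjection_apply K (s j)).symm.trans
      (Submodule.eq_starProjection_of_mem_of_inner_eq_zero (K := K) (haK j) fun w hw => ?_)
    have hd : s j - (∑ i ∈ t₁, ψ i j • v i) = ∑ i ∈ t₂, ψ i j • v i := by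
      rw [hsplit j]; abel
    rw [hd]
    exact hbK j w hw
  have hres : ∀ j, s j - (K.orthogonalProjectionOnto (s j) : EuclideanSpace ℝ (Fin m))
      = ∑ i ∈ t₂, ψ i j • v i := by
    intro j
    rw [hproj j, hsplit j]; abel
  have hnorm1 : ∀ j, ‖s j - (K.orthogonalProjectionOnto (s j) : EuclideanSpace ℝ (Fin m))‖ ^ 2
      = ∑ i ∈ t₂, ψ i j ^ 2 * σ i ^ 2 := fun j => by rw [hres j, hnormc]
  have hnorm2 : ∀ j, ‖s j‖ ^ 2 = ∑ i : Fin n, ψ i j ^ 2 * σ i ^ 2 :=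
    fun j => by rw [hexp j, hnormc]
  have hrow : ∀ i : Fin n, (∑ j, ψ i j ^ 2) = 1 := by
    intro i
    have := hψ i i
    simpa [dotProduct, pow_two] using this
  have hsum1 : (∑ j : Fin n, ∑ i ∈ t₂, ψ i j ^ 2 * σ i ^ 2) = ∑ i ∈ t₂, σ i ^ 2 := by
    rw [Finset.sum_comm]
    exact Finset.sum_congr rfl fun i _ => by rw [← Finset.sum_mul, hrow i, one_mul]
  have hsum2 : (∑ j : Fin n, ∑ i : Fin n, ψ i j ^ 2 * σ i ^ 2) = ∑ i : Fin n, σ i ^ 2 := by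
    rw [Finset.sum_comm]
    exact Finset.sum_congr rfl fun i _ => by rw [← Finset.sum_mul, hrow i, one_mul]
  have hTpos : 0 < ∑ i : Fin n, σ i ^ 2 := by
    obtain ⟨i, hi⟩ := hnotall
    have h1 : 0 < σ i ^ 2 := by positivity
    have h2 : σ i ^ 2 ≤ ∑ k : Fin n, σ k ^ 2 :=
      Finset.single_le_sum (f := fun k : Fin n => σ k ^ 2)
        (fun k _ => sq_nonneg _) (Finset.mem_univ i)
    linarith
  have hAB : (∑ i ∈ t₁, σ i ^ 2) + (∑ i ∈ t₂, σ i ^ 2) = ∑ i : Fin n, σ i ^ 2 := by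
    rw [ht₁, ht₂, Finset.sum_filter_add_sum_filter_not]
  have hB : (∑ i ∈ t₂, σ i ^ 2) ≤ ε * ∑ i : Fin n, σ i ^ 2 := by
    have h1 : (1 - (∑ i ∈ t₁, σ i ^ 2) / ∑ i : Fin n, σ i ^ 2)
        * (∑ i : Fin n, σ i ^ 2) ≤ ε * ∑ i : Fin n, σ i ^ 2 :=
      mul_le_mul_of_nonneg_right hε (le_of_lt hTpos)
    have h2 : (1 - (∑ i ∈ t₁, σ i ^ 2) / ∑ i : Fin n, σ i ^ 2)
        * (∑ i : Fin n, σ i ^ 2) = (∑ i : Fin n, σ i ^ 2) - ∑ i ∈ t₁, σ i ^ 2 := by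
      field_simp
    linarith
  calc ∑ j : Fin n,
        ‖s j - (K.orthogonalProjectionOnto (s j) : EuclideanSpace ℝ (Fin m))‖ ^ 2
      = ∑ i ∈ t₂, σ i ^ 2 := by
        rw [Finset.sum_congr rfl fun j _ => hnorm1 j, hsum1]
    _ ≤ ε * ∑ i : Fin n, σ i ^ 2 := hB
    _ = ε * ∑ j : Fin n, ‖s j‖ ^ 2 := by
        rw [Finset.sum_congr rfl fun j _ => hnorm2 j, hsum2]
end
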